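/- Let n ≥ 1 and π ∈ S_n. If π avoids the pattern 312, then adi π = (2-13)π. If π avoids the pattern 231, then adi* π = (13-2)π. -/

import Mathlib

open scoped Classical
open Finset

/-- Value of `π` at the 1-indexed position `i`, as a number in `{1,…,n}`;
positions outside `[1,n]` get the boundary value `b`. -/
def pvalB {n : ℕ} (b : ℕ) (π : Equiv.Perm (Fin n)) (i : ℕ) : ℕ :=
  if h : 1 ≤ i ∧ i ≤ n then (π ⟨i - 1, by omega⟩).val + 1 else b

/-- Value of `π` at the 1-indexed position `i` (boundary value 0). -/
def pval {n : ℕ} (π : Equiv.Perm (Fin n)) : ℕ → ℕ := pvalB 0 π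

/-- number of descents -/
def desStat {n : ℕ} (π : Equiv.Perm (Fin n)) : ℕ :=
  ((Finset.Icc 1 (n - 1)).filter fun i => pval π (i + 1) < pval π i).card

/-- number of excedances -/
def excStat {n : ℕ} (π : Equiv.Perm (Fin n)) : ℕ :=
  ((Finset.Icc 1 n).filter fun i => i < pval π i).card

/-- number of weak excedances -/
def wexStat {n : ℕ} (π : Equiv.Perm (Fin n)) : ℕ :=
  ((Finset.Icc 1 n).filter fun i => i ≤ pval π i).card

/-- number of inversions -/
def invStat {n : ℕ} (π : Equiv.Perm (Fin n)) : ℕ :=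
  (((Finset.Icc 1 n) ×ˢ (Finset.Icc 1 n)).filter fun p =>
    p.1 < p.2 ∧ pval π p.2 < pval π p.1).card

/-- number of fixed points -/
def fixStat {n : ℕ} (π : Equiv.Perm (Fin n)) : ℕ :=
  ((Finset.Icc 1 n).filter fun i => pval π i = i).card

/-- number of occurrences of the vincular pattern 31-2:
pairs (i,j) with i+1 < j ≤ n and π(i+1) < π(j) < π(i) -/
def v31_2 {n : ℕ} (π : Equiv.Perm (Fin n)) : ℕ :=
  (((Finset.Icc 1 n) ×ˢ (Finset.Icc 1 n)).filter fun p =>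
    p.1 + 1 < p.2 ∧ pval π (p.1 + 1) < pval π p.2 ∧ pval π p.2 < pval π p.1).card

/-- number of occurrences of the vincular pattern 13-2:
pairs (i,j) with i+1 < j ≤ n and π(i) < π(j) < π(i+1) -/
def v13_2 {n : ℕ} (π : Equiv.Perm (Fin n)) : ℕ :=
  (((Finset.Icc 1 n) ×ˢ (Finset.Icc 1 n)).filter fun p =>
    p.1 + 1 < p.2 ∧ pval π p.1 < pval π p.2 ∧ pval π p.2 < pval π (p.1 + 1)).card

/-- number of occurrences of the vincular pattern 2-31:
pairs (i,j) with 1 ≤ j < i ≤ n-1 and π(i+1) < π(j) < π(i); here `p = (i, j)` -/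
def v2_31 {n : ℕ} (π : Equiv.Perm (Fin n)) : ℕ :=
  (((Finset.Icc 1 (n - 1)) ×ˢ (Finset.Icc 1 (n - 1))).filter fun p =>
    p.2 < p.1 ∧ pval π (p.1 + 1) < pval π p.2 ∧ pval π p.2 < pval π p.1).card

/-- number of occurrences of the vincular pattern 2-13:
pairs (i,j) with 1 ≤ j < i ≤ n-1 and π(i) < π(j) < π(i+1); here `p = (i, j)` -/
def v2_13 {n : ℕ} (π : Equiv.Perm (Fin n)) : ℕ :=
  (((Finset.Icc 1 (n - 1)) ×ˢ (Finset.Icc 1 (n - 1))).filter fun p =>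
    p.2 < p.1 ∧ pval π p.1 < pval π p.2 ∧ pval π p.2 < pval π (p.1 + 1)).card

/-- number of occurrences of the vincular pattern 3-12:
pairs (i,j) with 1 ≤ i < j ≤ n-1 and π(j) < π(j+1) < π(i) -/
def v3_12 {n : ℕ} (π : Equiv.Perm (Fin n)) : ℕ :=
  (((Finset.Icc 1 (n - 1)) ×ˢ (Finset.Icc 1 (n - 1))).filter fun p =>
    p.1 < p.2 ∧ pval π p.2 < pval π (p.2 + 1) ∧ pval π (p.2 + 1) < pval π p.1).card

/-- number of admissible inversions -/
noncomputable def adiStat {n : ℕ} (π : Equiv.Perm (Fin n)) : ℕ :=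
  (((Finset.Icc 1 n) ×ˢ (Finset.Icc 1 n)).filter fun p =>
    p.1 < p.2 ∧ pval π p.2 < pval π p.1 ∧
      ((p.2 < n ∧ pval π p.2 < pval π (p.2 + 1)) ∨
        ∃ l, p.1 < l ∧ l < p.2 ∧ pval π l < pval π p.2)).card

/-- number of star admissible inversions -/
noncomputable def adiStarStat {n : ℕ} (π : Equiv.Perm (Fin n)) : ℕ :=
  (((Finset.Icc 1 n) ×ˢ (Finset.Icc 1 n)).filter fun p =>
    p.1 < p.2 ∧ pval π p.2 < pval π p.1 ∧
      ((1 < p.1 ∧ pval π (p.1 - 1) < pval π p.1) ∨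
        ∃ l, p.1 < l ∧ l < p.2 ∧ pval π p.1 < pval π l)).card

/-- nesting number -/
def nestStat {n : ℕ} (π : Equiv.Perm (Fin n)) : ℕ :=
  (((Finset.Icc 1 n) ×ˢ (Finset.Icc 1 n)).filter fun p =>
    p.1 < p.2 ∧ p.2 ≤ pval π p.2 ∧ pval π p.2 < pval π p.1).card +
  (((Finset.Icc 1 n) ×ˢ (Finset.Icc 1 n)).filter fun p =>
    p.1 < p.2 ∧ pval π p.2 < pval π p.1 ∧ pval π p.1 < p.1).card

/-- `π` avoids the pattern given (in one-line notation) by the sequence `p` -/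
def avoids {n k : ℕ} (π : Equiv.Perm (Fin n)) (p : Fin k → ℕ) : Prop :=
  ¬ ∃ f : Fin k ↪o Fin n, ∀ a b : Fin k, p a < p b ↔ π (f a) < π (f b)

/-- `π` has no double descent, with boundary values `b` at positions 0 and n+1 -/
def noDD {n : ℕ} (b : ℕ) (π : Equiv.Perm (Fin n)) : Prop :=
  ∀ i, 1 ≤ i → i ≤ n →
    ¬ (pvalB b π i < pvalB b π (i - 1) ∧ pvalB b π (i + 1) < pvalB b π i)

/-- alternating (up-down): π(1) < π(2) > π(3) < π(4) > ⋯ -/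
def isAlt {n : ℕ} (π : Equiv.Perm (Fin n)) : Prop :=
  ∀ i, 1 ≤ i → i + 1 ≤ n →
    (Odd i → pval π i < pval π (i + 1)) ∧ (Even i → pval π (i + 1) < pval π i)

/-- down-up: π(1) > π(2) < π(3) > π(4) < ⋯ -/
def isDownUp {n : ℕ} (π : Equiv.Perm (Fin n)) : Prop :=
  ∀ i, 1 ≤ i → i + 1 ≤ n →
    (Odd i → pval π (i + 1) < pval π i) ∧ (Even i → pval π i < pval π (i + 1))

/-- `i` is a foremaximum of `π` -/
def isForemax {n : ℕ} (π : Equiv.Perm (Fin n)) (i : ℕ) : Prop :=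
  1 ≤ i ∧ i ≤ n ∧ (∀ j, 1 ≤ j → j ≤ i → pval π j ≤ pval π i) ∧
    (i = n ∨ pval π i < pval π (i + 1))

/-- coderangement: no foremaximum -/
def isCoderangement {n : ℕ} (π : Equiv.Perm (Fin n)) : Prop :=
  ∀ i, ¬ isForemax π i

/-- derangement: no fixed point -/
def isDerangement {n : ℕ} (π : Equiv.Perm (Fin n)) : Prop := ∀ i, π i ≠ i

/-- the order-reversing permutation of positions -/
def revPermN (n : ℕ) : Equiv.Perm (Fin n) := ⟨Fin.rev, Fin.rev, Fin.rev_rev, Fin.rev_rev⟩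

/-- the reverse of `π`: πʳ(i) = π(n+1-i) -/
def reverseP {n : ℕ} (π : Equiv.Perm (Fin n)) : Equiv.Perm (Fin n) := (revPermN n).trans π


lemma pval_eq {n : ℕ} (π : Equiv.Perm (Fin n)) {i : ℕ} (h1 : 1 ≤ i) (h2 : i ≤ n) :
    pval π i = (π ⟨i - 1, by omega⟩).val + 1 := by
  simp [pval, pvalB, h1, h2]

lemma pval_ne {n : ℕ} (π : Equiv.Perm (Fin n)) {x y : ℕ}
    (hx : 1 ≤ x) (hxn : x ≤ n) (hy : 1 ≤ y) (hyn : y ≤ n) (hxy : x ≠ y) :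
    pval π x ≠ pval π y := by
  rw [pval_eq π hx hxn, pval_eq π hy hyn]
  intro h
  have h2 : π ⟨x - 1, by omega⟩ = π ⟨y - 1, by omega⟩ := Fin.ext (by omega)
  have h3 := π.injective h2
  simp [Fin.mk.injEq] at h3
  omega

lemma mk3 {n : ℕ} (π : Equiv.Perm (Fin n)) (p : Fin 3 → ℕ) {a b c : ℕ}
    (ha : 1 ≤ a) (hab : a < b) (hbc : b < c) (hc : c ≤ n)
    (h : ∀ x y : Fin 3, p x < p y ↔
      pval π (![a,b,c] x) < pval π (![a,b,c] y)) :
    ¬ avoids π p := by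
  intro hav
  apply hav
  have hm : StrictMono (![(⟨a-1, by omega⟩ : Fin n), ⟨b-1, by omega⟩, ⟨c-1, by omega⟩]) := by
    intro x y hxy
    fin_cases x <;> fin_cases y <;> simp_all [Fin.lt_def] <;> omega
  refine ⟨OrderEmbedding.ofStrictMono _ hm, fun x y => ?_⟩
  have key := h x y
  have e : ∀ z : Fin 3, (OrderEmbedding.ofStrictMono _ hm) z
      = ![(⟨a-1, by omega⟩ : Fin n), ⟨b-1, by omega⟩, ⟨c-1, by omega⟩] z := fun z => rfl
  rw [e x, e y]
  have hb1 : 1 ≤ b := by omega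
  have hbn : b ≤ n := by omega
  have hc1 : 1 ≤ c := by omega
  have han : a ≤ n := by omega
  fin_cases x <;> fin_cases y <;>
    simp only [show ((⟨0, by omega⟩ : Fin 3)) = 0 from rfl,
      show ((⟨1, by omega⟩ : Fin 3)) = 1 from rfl,
      show ((⟨2, by omega⟩ : Fin 3)) = 2 from rfl] at key ⊢ <;>
    simp only [Matrix.cons_val_zero, Matrix.cons_val_one, Matrix.head_cons,
      Matrix.cons_val_two, Matrix.tail_cons] at key ⊢ <;>
    simp only [pval_eq π ha han, pval_eq π hb1 hbn, pval_eq π hc1 hc, Fin.lt_def] at key ⊢ <;>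
    omega

lemma mk312 {n : ℕ} (π : Equiv.Perm (Fin n)) {a b c : ℕ}
    (ha : 1 ≤ a) (hab : a < b) (hbc : b < c) (hc : c ≤ n)
    (h1 : pval π b < pval π c) (h2 : pval π c < pval π a) :
    ¬ avoids π ![3,1,2] := by
  apply mk3 π _ ha hab hbc hc
  intro x y
  fin_cases x <;> fin_cases y <;>
    simp only [show ((⟨0, by omega⟩ : Fin 3)) = 0 from rfl,
      show ((⟨1, by omega⟩ : Fin 3)) = 1 from rfl,
      show ((⟨2, by omega⟩ : Fin 3)) = 2 from rfl] <;>
    simp only [Matrix.cons_val_zero, Matrix.cons_val_one, Matrix.head_cons,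
      Matrix.cons_val_two, Matrix.tail_cons] <;>
    omega

lemma mk231 {n : ℕ} (π : Equiv.Perm (Fin n)) {a b c : ℕ}
    (ha : 1 ≤ a) (hab : a < b) (hbc : b < c) (hc : c ≤ n)
    (h1 : pval π c < pval π a) (h2 : pval π a < pval π b) :
    ¬ avoids π ![2,3,1] := by
  apply mk3 π _ ha hab hbc hc
  intro x y
  fin_cases x <;> fin_cases y <;>
    simp only [show ((⟨0, by omega⟩ : Fin 3)) = 0 from rfl,
      show ((⟨1, by omega⟩ : Fin 3)) = 1 from rfl,
      show ((⟨2, by omega⟩ : Fin 3)) = 2 from rfl] <;>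
    simp only [Matrix.cons_val_zero, Matrix.cons_val_one, Matrix.head_cons,
      Matrix.cons_val_two, Matrix.tail_cons] <;>
    omega

lemma stmt8_part1 {n : ℕ} (hn : 1 ≤ n) (π : Equiv.Perm (Fin n))
    (hav : avoids π ![3,1,2]) : adiStat π = v2_13 π := by
  unfold adiStat v2_13
  apply Finset.card_nbij' (fun p => (p.2, p.1)) (fun p => (p.2, p.1))
  · intro p hp
    simp only [Finset.mem_coe, Finset.mem_filter, Finset.mem_product, Finset.mem_Icc] at hp ⊢
    obtain ⟨⟨⟨hi1, hin⟩, hj1, hjn⟩, hij, hinv, hD⟩ := hp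
    have hD1 : p.2 < n ∧ pval π p.2 < pval π (p.2 + 1) := by
      rcases hD with h | ⟨l, hl1, hl2, hl3⟩
      · exact h
      · exact absurd hav (mk312 π hi1 hl1 hl2 hjn hl3 hinv)
    obtain ⟨hjn', hasc⟩ := hD1
    have hkey : pval π p.1 < pval π (p.2 + 1) := by
      by_contra hcon
      push_neg at hcon
      have hne := pval_ne π (show 1 ≤ p.2 + 1 by omega) (show p.2 + 1 ≤ n by omega)
        hi1 hin (by omega)
      have hlt : pval π (p.2 + 1) < pval π p.1 := lt_of_le_of_ne hcon hne
      exact absurd hav (mk312 π hi1 hij (by omega) (by omega) hasc hlt)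
    exact ⟨⟨⟨hj1, by omega⟩, hi1, by omega⟩, hij, hinv, hkey⟩
  · intro p hp
    simp only [Finset.mem_coe, Finset.mem_filter, Finset.mem_product, Finset.mem_Icc] at hp ⊢
    obtain ⟨⟨⟨hI1, hI⟩, hJ1, hJ⟩, hJI, h1, h2⟩ := hp
    exact ⟨⟨⟨hJ1, by omega⟩, hI1, by omega⟩, hJI, h1,
      Or.inl ⟨by omega, lt_trans h1 h2⟩⟩
  · intro p _; rfl
  · intro p _; rfl

lemma stmt8_part2 {n : ℕ} (hn : 1 ≤ n) (π : Equiv.Perm (Fin n))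
    (hav : avoids π ![2,3,1]) : adiStarStat π = v13_2 π := by
  unfold adiStarStat v13_2
  apply Finset.card_nbij' (fun p => (p.1 - 1, p.2)) (fun p => (p.1 + 1, p.2))
  · intro p hp
    simp only [Finset.mem_coe, Finset.mem_filter, Finset.mem_product, Finset.mem_Icc] at hp ⊢
    obtain ⟨⟨⟨hi1, hin⟩, hj1, hjn⟩, hij, hinv, hD⟩ := hp
    have hD1 : 1 < p.1 ∧ pval π (p.1 - 1) < pval π p.1 := by
      rcases hD with h | ⟨l, hl1, hl2, hl3⟩
      · exact h
      · exact absurd hav (mk231 π hi1 hl1 hl2 hjn hinv hl3)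
    obtain ⟨hi1', hasc⟩ := hD1
    have heq : p.1 - 1 + 1 = p.1 := by omega
    have hkey : pval π (p.1 - 1) < pval π p.2 := by
      by_contra hcon
      push_neg at hcon
      have hne := pval_ne π hj1 hjn (show 1 ≤ p.1 - 1 by omega)
        (show p.1 - 1 ≤ n by omega) (by omega)
      have hlt : pval π p.2 < pval π (p.1 - 1) := lt_of_le_of_ne hcon hne
      exact absurd hav (mk231 π (show 1 ≤ p.1 - 1 by omega) (by omega) hij hjn hlt hasc)
    rw [heq]
    exact ⟨⟨⟨by omega, by omega⟩, hj1, hjn⟩, by omega, hkey, hinv⟩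
  · intro p hp
    simp only [Finset.mem_coe, Finset.mem_filter, Finset.mem_product, Finset.mem_Icc] at hp ⊢
    obtain ⟨⟨⟨hI1, hI⟩, hJ1, hJ⟩, hIJ, h1, h2⟩ := hp
    refine ⟨⟨⟨by omega, by omega⟩, hJ1, hJ⟩, by omega, h2,
      Or.inl ⟨by omega, ?_⟩⟩
    have heq : p.1 + 1 - 1 = p.1 := by omega
    rw [heq]
    exact lt_trans h1 h2
  · intro p hp
    simp only [Finset.mem_coe, Finset.mem_filter, Finset.mem_product, Finset.mem_Icc] at hp
    exact Prod.ext (by dsimp only; omega) rfl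
  · intro p _; exact Prod.ext (by dsimp only; omega) rfl

/-- admissible inversions as vincular pattern counts. -/
theorem stmt8 (n : ℕ) (hn : 1 ≤ n) (π : Equiv.Perm (Fin n)) :
    (avoids π ![3,1,2] → adiStat π = v2_13 π) ∧
    (avoids π ![2,3,1] → adiStarStat π = v13_2 π) := by
  exact ⟨stmt8_part1 hn π, stmt8_part2 hn π⟩
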